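/- The critical exponent of x_3 equals 2 + √2/2, and it is not attained: the supremum, over all positions i, lengths n ≥ 1 and periods p ≥ 1 with x_3[i+j] = x_3[i+j+p] for all 0 ≤ j < n − p, of the real numbers n/p equals 2 + √2/2, while every such n/p is strictly less than 2 + √2/2. -/

import Mathlib

/-- The characteristic Sturmian word with slope `α = √2 - 1`, indexed from 1:
`c_α[n] = ⌊α(n+1)⌋ - ⌊αn⌋`. -/
noncomputable def calpha (n : ℕ) : ℤ :=
  ⌊(Real.sqrt 2 - 1) * ((n : ℝ) + 1)⌋ - ⌊(Real.sqrt 2 - 1) * (n : ℝ)⌋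

/-- `zcount m` = number of indices `1 ≤ j ≤ m` with `c_α[j] = 0`. -/
noncomputable def zcount (m : ℕ) : ℕ :=
  ((Finset.Icc 1 m).filter fun j => calpha j = 0).card

/-- `ocount m` = number of indices `1 ≤ j ≤ m` with `c_α[j] = 1`. -/
noncomputable def ocount (m : ℕ) : ℕ :=
  ((Finset.Icc 1 m).filter fun j => calpha j = 1).card

/-- The infinite balanced word `x₃` over `{0,1,2}`, indexed from 0, obtained from
`c_α` by replacing the 0's by `(01)^ω` and the 1's by `2^ω`. -/
noncomputable def x3 (i : ℕ) : ℕ :=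
  if calpha (i + 1) = 0 then [0, 1].getD ((zcount (i + 1) - 1) % 2) 0
  else 2

/-- The set of exponents `n/p` of nonempty factors of `x₃` with period `p ≥ 1`. -/
noncomputable def x3Exponents : Set ℝ :=
  {r : ℝ | ∃ i n p : ℕ, 1 ≤ n ∧ 1 ≤ p ∧
    (∀ j, j + p < n → x3 (i + j) = x3 (i + j + p)) ∧ r = (n : ℝ) / (p : ℝ)}

noncomputable def uu (t : ℕ) : ℤ := ⌊Real.sqrt 2 * (t : ℝ)⌋

lemma sq_s2 : Real.sqrt 2 ^ 2 = 2 := Real.sq_sqrt (by norm_num)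

lemma one_lt_s2 : 1 < Real.sqrt 2 := by
  nlinarith [sq_s2, Real.sqrt_nonneg 2]

lemma s2_lt : Real.sqrt 2 < 1.5 := by
  nlinarith [sq_s2, Real.sqrt_nonneg 2]

/-- √2 · a is never an integer for a ≠ 0 -/
lemma s2_irr (a b : ℤ) (ha : a ≠ 0) : Real.sqrt 2 * (a : ℝ) ≠ (b : ℝ) := by
  intro h
  have hs2 : Real.sqrt 2 = ((b : ℚ) / (a : ℚ) : ℚ) := by
    have ha' : (a : ℝ) ≠ 0 := Int.cast_ne_zero.mpr ha
    push_cast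
    field_simp
    linarith [h]
  exact irrational_sqrt_two ⟨_, hs2.symm⟩

lemma uu_le (t : ℕ) : (uu t : ℝ) ≤ Real.sqrt 2 * t := Int.floor_le _

lemma lt_uu (t : ℕ) : Real.sqrt 2 * t < (uu t : ℝ) + 1 := Int.lt_floor_add_one _

lemma uu_lt (t : ℕ) (ht : 1 ≤ t) : (uu t : ℝ) < Real.sqrt 2 * t := by
  rcases lt_or_eq_of_le (uu_le t) with h | h
  · exact h
  · exact absurd h.symm (s2_irr t (uu t) (by exact_mod_cast Nat.one_le_iff_ne_zero.mp ht))

lemma uu_zero : uu 0 = 0 := by simp [uu]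

lemma uu_one : uu 1 = 1 := by
  have h1 := one_lt_s2; have h2 := s2_lt
  simp only [uu, Nat.cast_one, mul_one]
  apply Int.floor_eq_iff.mpr
  constructor <;> push_cast <;> linarith

/-- the step of uu is 1 or 2 -/
lemma uu_step (t : ℕ) : uu (t+1) = uu t + 1 ∨ uu (t+1) = uu t + 2 := by
  have h1 := uu_le t; have h2 := lt_uu t
  have h3 := uu_le (t+1); have h4 := lt_uu (t+1)
  have hs1 := one_lt_s2; have hs2 := s2_lt
  have e : (((t:ℕ)+1 : ℕ) : ℝ) = (t : ℝ) + 1 := by push_cast; ring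
  rw [e] at h3 h4
  have l1 : (uu t : ℝ) < uu (t+1) := by nlinarith
  have l2 : (uu (t+1) : ℝ) < (uu t : ℝ) + 3 := by nlinarith
  have l1' : uu t < uu (t+1) := by exact_mod_cast l1
  have l2' : uu (t+1) < uu t + 3 := by exact_mod_cast l2
  omega

/-- no two consecutive steps of size 2 -/
lemma uu_no22 (t : ℕ) : uu (t+2) ≤ uu t + 3 := by
  have h1 := uu_le t; have h2 := lt_uu t
  have h3 := uu_le (t+2); have h4 := lt_uu (t+2)
  have hs1 := one_lt_s2; have hs2 := s2_lt
  have e : (((t:ℕ)+2 : ℕ) : ℝ) = (t : ℝ) + 2 := by push_cast; ring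
  rw [e] at h3 h4
  have l2 : (uu (t+2) : ℝ) < (uu t : ℝ) + 4 := by nlinarith
  have l2' : uu (t+2) < uu t + 4 := by exact_mod_cast l2
  omega

lemma calpha_eq (n : ℕ) : calpha n = uu (n+1) - uu n - 1 := by
  have e1 : (Real.sqrt 2 - 1) * ((n : ℝ) + 1) = Real.sqrt 2 * ((n:ℕ)+1 : ℕ) - ((n:ℤ)+1 : ℤ) := by
    push_cast; ring
  have e2 : (Real.sqrt 2 - 1) * (n : ℝ) = Real.sqrt 2 * (n : ℕ) - ((n:ℤ) : ℤ) := by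
    push_cast; ring
  simp only [calpha, e1, e2, Int.floor_sub_intCast]
  simp only [uu]
  push_cast
  ring

lemma calpha_cases (n : ℕ) : calpha n = 0 ∨ calpha n = 1 := by
  rw [calpha_eq]
  rcases uu_step n with h | h <;> omega

lemma zcount_eq (m : ℕ) : (zcount m : ℤ) = 2*m + 1 - uu (m+1) := by
  induction m with
  | zero => simp [zcount, uu_one]
  | succ m ih =>
    have hstep : zcount (m+1) = zcount m + (if calpha (m+1) = 0 then 1 else 0) := by
      unfold zcount
      have hins : Finset.Icc 1 (m+1) = insert (m+1) (Finset.Icc 1 m) := by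
        ext x; simp only [Finset.mem_Icc, Finset.mem_insert]; omega
      rw [hins, Finset.filter_insert]
      split
      · rw [Finset.card_insert_of_notMem (by simp)]
      · simp
    rw [hstep]
    rcases calpha_cases (m+1) with h | h
    · have := calpha_eq (m+1)
      simp only [h, if_pos rfl] at *
      push_cast
      omega
    · have := calpha_eq (m+1)
      rw [h] at this
      simp only [if_neg (by omega : ¬ calpha (m+1) = 0)]
      push_cast
      omega

lemma x3_of_one (i : ℕ) (h : calpha (i+1) = 1) : x3 i = 2 := by
  simp [x3, h]

lemma uu_upper_bd (i : ℕ) : uu (i+2) ≤ 2*(i:ℤ) + 2 := by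
  have h3 := uu_le (i+2)
  have hs2 := s2_lt
  have e : (((i:ℕ)+2 : ℕ) : ℝ) = (i : ℝ) + 2 := by push_cast; ring
  rw [e] at h3
  have : (uu (i+2) : ℝ) < 2*(i:ℝ) + 3 := by nlinarith [Nat.cast_nonneg (α := ℝ) i]
  have h' : uu (i+2) < 2*(i:ℤ) + 3 := by exact_mod_cast this
  omega

lemma x3_of_zero (i : ℕ) (h : calpha (i+1) = 0) :
    (x3 i : ℤ) = (uu (i+1) + 1) % 2 ∧ x3 i ≠ 2 := by
  have hz : (zcount (i+1) : ℤ) = 2*(i:ℤ) + 3 - uu (i+2) := by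
    have := zcount_eq (i+1); push_cast at this ⊢; linarith
  have hca := calpha_eq (i+1)
  rw [h, show i+1+1 = i+2 from rfl] at hca
  have hstep : uu (i+2) = uu (i+1) + 1 := by omega
  have hub := uu_upper_bd i
  have hz1 : 1 ≤ zcount (i+1) := by
    have : (1:ℤ) ≤ (zcount (i+1) : ℤ) := by omega
    exact_mod_cast this
  have hx : x3 i = (zcount (i+1) - 1) % 2 := by
    unfold x3
    rw [if_pos h]
    rcases Nat.mod_two_eq_zero_or_one (zcount (i+1) - 1) with h2 | h2 <;> rw [h2] <;> rfl
  have hcast : ((zcount (i+1) - 1 : ℕ) : ℤ) = (zcount (i+1) : ℤ) - 1 := by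
    omega
  constructor
  · rw [hx]
    push_cast [hcast]
    omega
  · rw [hx]; omega

/-- If the letters at i+j and i+j+p agree, the uu-steps agree, and parity matches when non-2. -/
lemma match_letters (i j p : ℕ) (H : x3 (i+j) = x3 (i+j+p)) :
    uu (i+j+2) - uu (i+j+1) = uu (i+j+p+2) - uu (i+j+p+1) ∧
    (uu (i+j+2) - uu (i+j+1) = 1 → (uu (i+j+p+1) - uu (i+j+1)) % 2 = 0) := by
  have hca1 := calpha_eq (i+j+1)
  have hca2 := calpha_eq (i+j+p+1)
  rw [show i+j+1+1 = i+j+2 from rfl] at hca1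
  rw [show i+j+p+1+1 = i+j+p+2 from rfl] at hca2
  rcases calpha_cases (i+j+1) with h1 | h1 <;> rcases calpha_cases (i+j+p+1) with h2 | h2
  · -- both 0
    obtain ⟨e1, _⟩ := x3_of_zero (i+j) h1
    obtain ⟨e2, _⟩ := x3_of_zero (i+j+p) (by rw [show i+j+p+1 = i+j+p+1 from rfl]; exact h2)
    have : (x3 (i+j) : ℤ) = (x3 (i+j+p) : ℤ) := by rw [H]
    rw [e1, e2] at this
    constructor
    · omega
    · intro _; omega
  · -- 0, 1 : contradiction
    obtain ⟨_, hne⟩ := x3_of_zero (i+j) h1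
    have := x3_of_one (i+j+p) h2
    rw [H] at hne
    exact absurd this hne
  · -- 1, 0 : contradiction
    obtain ⟨_, hne⟩ := x3_of_zero (i+j+p) h2
    have := x3_of_one (i+j) h1
    rw [← H] at hne
    exact absurd this hne
  · -- both 1
    constructor
    · omega
    · intro hx; omega

/-- The walk lemma: with two step sizes moving the value up by μ and down by ν,
every window of length pp+kk contains a point whose value lies in (0, μ+ν). -/
lemma walk (ξ μ ν : ℝ) (kk pp : ℕ) (hk : 1 ≤ kk) (hμ : 0 < μ) (hν : 0 < ν)
    (mA mB : ℤ) (hA : ξ * (kk : ℝ) + (mA : ℝ) = μ) (hB : ξ * ((pp : ℝ) + (kk : ℝ)) + (mB : ℝ) = -ν)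
    (hirr : ∀ t : ℕ, 1 ≤ t → ∀ m : ℤ, ξ * (t : ℝ) + (m : ℝ) ≠ 0) :
    ∀ X : ℕ, 1 ≤ X → ∃ t : ℕ, X ≤ t ∧ t + 1 ≤ X + pp + kk ∧
      ∃ m : ℤ, 0 < ξ * (t : ℝ) + (m : ℝ) ∧ ξ * (t : ℝ) + (m : ℝ) < μ + ν := by
  intro X hX
  induction X, hX using Nat.le_induction with
  | base =>
    refine ⟨kk, hk, by omega, mA, ?_, ?_⟩
    · rw [hA]; exact hμ
    · rw [hA]; linarith
  | succ X hX ih =>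
    obtain ⟨t, ht1, ht2, m, hm1, hm2⟩ := ih
    rcases lt_or_ge t (X+1) with hlt | hge
    · -- t = X, must step
      have htX : t = X := by omega
      have hval : ξ * (t : ℝ) + (m : ℝ) < ν ∨ ξ * (t : ℝ) + (m : ℝ) = ν ∨
          ν < ξ * (t : ℝ) + (m : ℝ) := lt_trichotomy _ _
      rcases hval with he | he | he
      · -- step up by kk
        refine ⟨t + kk, by omega, by omega, m + mA, ?_, ?_⟩
        · have : ξ * ((t + kk : ℕ) : ℝ) + ((m + mA : ℤ) : ℝ)
              = (ξ * (t : ℝ) + (m : ℝ)) + μ := by push_cast; linear_combination hA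
          rw [this]; linarith
        · have : ξ * ((t + kk : ℕ) : ℝ) + ((m + mA : ℤ) : ℝ)
              = (ξ * (t : ℝ) + (m : ℝ)) + μ := by push_cast; linear_combination hA
          rw [this]; linarith
      · -- impossible by irrationality
        exfalso
        have : ξ * ((t + pp + kk : ℕ) : ℝ) + ((m + mB : ℤ) : ℝ) = 0 := by
          push_cast; linear_combination hB + he
        exact hirr (t + pp + kk) (by omega) (m + mB) this
      · -- step down by pp + kk
        refine ⟨t + pp + kk, by omega, by omega, m + mB, ?_, ?_⟩
        · have : ξ * ((t + pp + kk : ℕ) : ℝ) + ((m + mB : ℤ) : ℝ)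
              = (ξ * (t : ℝ) + (m : ℝ)) - ν := by push_cast; linear_combination hB
          rw [this]; linarith
        · have : ξ * ((t + pp + kk : ℕ) : ℝ) + ((m + mB : ℤ) : ℝ)
              = (ξ * (t : ℝ) + (m : ℝ)) - ν := by push_cast; linear_combination hB
          rw [this]; linarith
    · exact ⟨t, hge, by omega, m, hm1, hm2⟩

theorem upper_exp (i n p : ℕ) (hp : 1 ≤ p)
    (H : ∀ j, j + p < n → x3 (i + j) = x3 (i + j + p)) :
    (n : ℝ) / (p : ℝ) < 2 + Real.sqrt 2 / 2 := by
  have hp' : (0:ℝ) < p := by exact_mod_cast hp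
  have hs1 := one_lt_s2
  have hs2 := s2_lt
  have hsq := sq_s2
  rcases le_or_gt n (p+1) with hcase | hcase
  · rw [div_lt_iff₀ hp']
    have hnn : (n:ℝ) ≤ (p:ℝ) + 1 := by exact_mod_cast hcase
    have hp1 : (1:ℝ) ≤ (p:ℝ) := by exact_mod_cast hp
    nlinarith [mul_le_mul_of_nonneg_left hp1 (Real.sqrt_nonneg 2)]
  · -- n ≥ p + 2
    obtain ⟨w, hw, hw2⟩ : ∃ w, n = p + w ∧ 2 ≤ w := ⟨n - p, by omega, by omega⟩
    set K : ℤ := uu (i+1+p) - uu (i+1) with hKdef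
    -- step equality
    have step : ∀ t, i+1 ≤ t → t ≤ i + w → uu (t+1) - uu t = uu (t+p+1) - uu (t+p) := by
      intro t h1 h2
      have hj : (t - 1 - i) + p < n := by omega
      have hm := match_letters i (t-1-i) p (H _ hj)
      have e1 : i + (t-1-i) + 2 = t + 1 := by omega
      have e2 : i + (t-1-i) + 1 = t := by omega
      have e3 : i + (t-1-i) + p + 2 = t + p + 1 := by omega
      have e4 : i + (t-1-i) + p + 1 = t + p := by omega
      rw [e1, e2, e3, e4] at hm
      exact hm.1
    -- constancy
    have CK : ∀ t, i+1 ≤ t → t ≤ i + w + 1 → uu (t+p) - uu t = K := by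
      intro t h1 h2
      induction t, h1 using Nat.le_induction with
      | base => rfl
      | succ t h1 ih =>
        have hih := ih (by omega)
        have hstep := step t h1 (by omega)
        have e5 : t + 1 + p = t + p + 1 := by omega
        rw [e5]
        omega
    -- parity
    have Keven : K % 2 = 0 := by
      have hzero : calpha (i+1) = 0 ∨ calpha (i+2) = 0 := by
        by_contra hcon
        push_neg at hcon
        obtain ⟨hc1, hc2⟩ := hcon
        rcases calpha_cases (i+1) with h | h; · exact hc1 h
        rcases calpha_cases (i+2) with h' | h'; · exact hc2 h'
        have e1 := calpha_eq (i+1)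
        have e2 := calpha_eq (i+2)
        rw [h, show i+1+1 = i+2 from rfl] at e1
        rw [h', show i+2+1 = i+3 from rfl] at e2
        have := uu_no22 (i+1)
        rw [show i+1+2 = i+3 from rfl] at this
        omega
      rcases hzero with hz | hz
      · have hj : 0 + p < n := by omega
        have hm := (match_letters i 0 p (H 0 hj)).2
        have e1 := calpha_eq (i+0+1)
        rw [show i+0+1 = i+1 from rfl, hz, show i+1+1 = i+2 from rfl] at e1
        rw [show i+0+2 = i+2 from rfl, show i+0+1 = i+1 from rfl, show i+0+p+1 = i+1+p by omega] at hm
        have := hm (by omega)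
        omega
      · have hj : 1 + p < n := by omega
        have hm := (match_letters i 1 p (H 1 hj)).2
        have e1 := calpha_eq (i+1+1)
        rw [show i+1+1 = i+2 from rfl, hz, show i+2+1 = i+3 from rfl] at e1
        rw [show i+1+2 = i+3 from rfl, show i+1+1 = i+2 from rfl] at hm
        have hm' := hm (by omega)
        have hCK := CK (i+2) (by omega) (by omega)
        have e6 : i+1+p+1 = i+2+p := by omega
        rw [e6] at hm'
        omega
    -- bounds on K
    have hKhigh : (K : ℝ) < Real.sqrt 2 * p + 1 := by
      have h1 := lt_uu (i+1)
      have h2 := uu_le (i+1+p)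
      have e : ((i+1+p : ℕ) : ℝ) = ((i+1 : ℕ) : ℝ) + (p : ℝ) := by push_cast; ring
      rw [e] at h2
      have : (uu (i+1+p) : ℝ) - (uu (i+1) : ℝ) < Real.sqrt 2 * p + 1 := by nlinarith
      calc (K : ℝ) = (uu (i+1+p) : ℝ) - (uu (i+1) : ℝ) := by rw [hKdef]; push_cast; ring
        _ < _ := this
    have hKlow : Real.sqrt 2 * p - 1 < (K : ℝ) := by
      have h1 := uu_le (i+1)
      have h2 := lt_uu (i+1+p)
      have e : ((i+1+p : ℕ) : ℝ) = ((i+1 : ℕ) : ℝ) + (p : ℝ) := by push_cast; ring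
      rw [e] at h2
      have : Real.sqrt 2 * p - 1 < (uu (i+1+p) : ℝ) - (uu (i+1) : ℝ) := by nlinarith
      calc Real.sqrt 2 * p - 1 < (uu (i+1+p) : ℝ) - (uu (i+1) : ℝ) := this
        _ = (K : ℝ) := by rw [hKdef]; push_cast; ring
    have hK1 : 1 ≤ K := by
      have hp1 : (1:ℝ) ≤ (p:ℝ) := by exact_mod_cast hp
      have : (0 : ℝ) < (K : ℝ) := by
        nlinarith [mul_le_mul_of_nonneg_left hp1 (Real.sqrt_nonneg 2)]
      exact_mod_cast this
    obtain ⟨k', hk'⟩ : ∃ k' : ℕ, (K : ℤ) = 2 * (k' : ℤ) ∧ 1 ≤ k' :=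
      ⟨K.toNat / 2, by omega, by omega⟩
    obtain ⟨hk'K, hk'1⟩ := hk'
    have hk'r : (K : ℝ) = 2 * (k' : ℝ) := by exact_mod_cast congrArg (fun z : ℤ => (z : ℝ)) hk'K
    -- d
    set d : ℝ := Real.sqrt 2 * p - K with hddef
    have hdne : d ≠ 0 := by
      intro h
      exact s2_irr p K (by exact_mod_cast Nat.one_le_iff_ne_zero.mp hp) (by push_cast; linarith)
    have hd1 : d < 1 := by rw [hddef]; linarith
    have hdm1 : -1 < d := by rw [hddef]; linarith
    -- main window bound : w ≤ p + k' - 2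
    have hwbound : w + 2 ≤ p + k' := by
      by_contra hcon
      push_neg at hcon
      -- window [i+1, i+w+1] has length w+1 ≥ p+k' : contains element of the bad set
      rcases lt_or_gt_of_ne hdne with hdneg | hdpos
      · -- d < 0 : use ξ = √2
        have hμ : (0:ℝ) < Real.sqrt 2 * k' - p := by nlinarith
        have hν : (0:ℝ) < ((p:ℝ) + K) - Real.sqrt 2 * ((p:ℝ) + k') := by nlinarith
        obtain ⟨t, ht1, ht2, m, hm1, hm2⟩ :=
          walk (Real.sqrt 2) (Real.sqrt 2 * k' - p) (((p:ℝ) + K) - Real.sqrt 2 * ((p:ℝ) + k'))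
            k' p hk'1 hμ hν (-(p:ℤ)) (-((p:ℤ) + K))
            (by push_cast; ring)
            (by push_cast; ring)
            (fun t ht m hm => s2_irr t (-m) (by exact_mod_cast Nat.one_le_iff_ne_zero.mp ht)
              (by push_cast at hm ⊢; linarith))
            (i+1) (by omega)
        have hsum : (Real.sqrt 2 * k' - p) + (((p:ℝ) + K) - Real.sqrt 2 * ((p:ℝ) + k')) = -d := by
          rw [hddef]; ring
        rw [hsum] at hm2
        -- t is in the window
        have htw : t ≤ i + w + 1 := by omega
        have hAV := CK t (by omega) htw
        -- compute uu t and uu (t+p)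
        have hut : uu t = -m := by
          apply Int.floor_eq_iff.mpr
          constructor
          · push_cast; linarith
          · push_cast; linarith
        have hutp : uu (t+p) = -m + K - 1 := by
          apply Int.floor_eq_iff.mpr
          have e : ((t+p : ℕ) : ℝ) = (t : ℝ) + (p : ℝ) := by push_cast; ring
          rw [e]
          constructor
          · push_cast
            have : Real.sqrt 2 * ((t:ℝ) + p) = (Real.sqrt 2 * t + m) + (-(m:ℝ)) + K + d := by
              rw [hddef]; ring
            rw [this]; linarith
          · push_cast
            have : Real.sqrt 2 * ((t:ℝ) + p) = (Real.sqrt 2 * t + m) + (-(m:ℝ)) + K + d := by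
              rw [hddef]; ring
            rw [this]; linarith
        omega
      · -- d > 0 : use ξ = -√2
        have hμ : (0:ℝ) < (p:ℝ) - Real.sqrt 2 * k' := by nlinarith
        have hν : (0:ℝ) < Real.sqrt 2 * ((p:ℝ) + k') - ((p:ℝ) + K) := by nlinarith
        obtain ⟨t, ht1, ht2, m, hm1, hm2⟩ :=
          walk (-(Real.sqrt 2)) ((p:ℝ) - Real.sqrt 2 * k') (Real.sqrt 2 * ((p:ℝ) + k') - ((p:ℝ) + K))
            k' p hk'1 hμ hν ((p:ℤ)) (((p:ℤ) + K))
            (by push_cast; ring)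
            (by push_cast; ring)
            (fun t ht m hm => s2_irr t m (by exact_mod_cast Nat.one_le_iff_ne_zero.mp ht)
              (by push_cast at hm ⊢; linarith))
            (i+1) (by omega)
        have hsum : ((p:ℝ) - Real.sqrt 2 * k') + (Real.sqrt 2 * ((p:ℝ) + k') - ((p:ℝ) + K)) = d := by
          rw [hddef]; ring
        rw [hsum] at hm2
        have htw : t ≤ i + w + 1 := by omega
        have hAV := CK t (by omega) htw
        have hut : uu t = m - 1 := by
          apply Int.floor_eq_iff.mpr
          constructor
          · push_cast; linarith
          · push_cast; linarith
        have hutp : uu (t+p) = m + K := by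
          apply Int.floor_eq_iff.mpr
          have e : ((t+p : ℕ) : ℝ) = (t : ℝ) + (p : ℝ) := by push_cast; ring
          rw [e]
          constructor
          · push_cast
            have : Real.sqrt 2 * ((t:ℝ) + p) = -((-(Real.sqrt 2)) * t + m) + (m:ℝ) + K + d := by
              rw [hddef]; ring
            rw [this]; linarith
          · push_cast
            have : Real.sqrt 2 * ((t:ℝ) + p) = -((-(Real.sqrt 2)) * t + m) + (m:ℝ) + K + d := by
              rw [hddef]; ring
            rw [this]; linarith
        omega
    -- conclude
    have hnr : (n : ℝ) = (p : ℝ) + (w : ℝ) := by rw [hw]; push_cast; ring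
    have hwr : (w : ℝ) ≤ (p : ℝ) + (k' : ℝ) - 2 := by
      have : (w : ℝ) + 2 ≤ (p:ℝ) + (k':ℝ) := by exact_mod_cast hwbound
      linarith
    have hkr2 : (k' : ℝ) < (Real.sqrt 2 * p + 1)/2 := by linarith
    rw [div_lt_iff₀ hp']
    linarith

/-- Pell pairs: solutions of m² = 2t² + 1. -/
def pellP : ℕ → ℕ × ℕ
  | 0 => (3, 2)
  | k+1 => (3 * (pellP k).1 + 4 * (pellP k).2, 2 * (pellP k).1 + 3 * (pellP k).2)

def pm (k : ℕ) : ℕ := (pellP k).1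
def pt (k : ℕ) : ℕ := (pellP k).2

lemma pm_zero : pm 0 = 3 := rfl
lemma pt_zero : pt 0 = 2 := rfl
lemma pm_succ (k : ℕ) : pm (k+1) = 3 * pm k + 4 * pt k := rfl
lemma pt_succ (k : ℕ) : pt (k+1) = 2 * pm k + 3 * pt k := rfl

lemma pell_sq (k : ℕ) : (pm k)^2 = 2 * (pt k)^2 + 1 := by
  induction k with
  | zero => rfl
  | succ k ih =>
    rw [pm_succ, pt_succ]
    nlinarith [ih]

lemma pt_ge_two (k : ℕ) : 2 ≤ pt k := by
  induction k with
  | zero => simp [pt_zero]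
  | succ k ih => rw [pt_succ]; omega

lemma pm_ge_three (k : ℕ) : 3 ≤ pm k := by
  induction k with
  | zero => simp [pm_zero]
  | succ k ih => rw [pm_succ]; omega

lemma pt_lt_pm (k : ℕ) : pt k < pm k := by
  nlinarith [pell_sq k, pt_ge_two k]

lemma pt_strictMono : StrictMono pt := by
  apply strictMono_nat_of_lt_succ
  intro k
  have := pm_ge_three k; have := pt_ge_two k
  rw [pt_succ]; omega

lemma pm_strictMono : StrictMono pm := by
  apply strictMono_nat_of_lt_succ
  intro k
  have := pm_ge_three k; have := pt_ge_two k
  rw [pm_succ]; omega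

lemma pm_ge (k : ℕ) : k + 3 ≤ pm k := by
  induction k with
  | zero => simp [pm_zero]
  | succ k ih => have := pt_ge_two k; rw [pm_succ]; omega

/-- classification of solutions of m² = 2t²+1 -/
theorem pell1_class : ∀ t m : ℕ, 1 ≤ t → m^2 = 2*t^2+1 → ∃ k, m = pm k ∧ t = pt k := by
  intro t
  induction t using Nat.strong_induction_on with
  | _ t ih =>
    intro m ht hm
    rcases le_or_gt t 2 with h2 | h2
    · interval_cases t
      · exfalso
        have hm4 : m ≤ 2 := by nlinarith
        interval_cases m <;> omega
      · have hm5 : m ≤ 3 := by nlinarith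
        have hm6 : 3 ≤ m := by nlinarith
        exact ⟨0, by rw [pm_zero]; omega, rfl⟩
    · -- t ≥ 3
      have hmt : t < m := by nlinarith
      have h34 : 4*t < 3*m := by nlinarith
      have h23 : 2*m < 3*t := by nlinarith
      set m' := 3*m - 4*t with hm'def
      set t' := 3*t - 2*m with ht'def
      have hA : (m' : ℤ) = 3*(m:ℤ) - 4*t := by omega
      have hB : (t' : ℤ) = 3*(t:ℤ) - 2*m := by omega
      have hmZ : (m:ℤ)^2 = 2*(t:ℤ)^2+1 := by exact_mod_cast hm
      have hsq' : (m' : ℤ)^2 = 2*(t':ℤ)^2 + 1 := by rw [hA, hB]; ring_nf; linarith [hmZ]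
      have hsq : m'^2 = 2*t'^2+1 := by exact_mod_cast hsq'
      have ht'1 : 1 ≤ t' := by omega
      have ht'lt : t' < t := by omega
      obtain ⟨k, hk1, hk2⟩ := ih t' ht'lt m' ht'1 hsq
      refine ⟨k+1, ?_, ?_⟩
      · rw [pm_succ, ← hk1, ← hk2]; omega
      · rw [pt_succ, ← hk1, ← hk2]; omega

/-- classification of solutions of 2u² = v²+1 -/
def pellQ : ℕ → ℕ × ℕ
  | 0 => (1, 1)
  | k+1 => (3 * (pellQ k).1 + 2 * (pellQ k).2, 4 * (pellQ k).1 + 3 * (pellQ k).2)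

def pu (k : ℕ) : ℕ := (pellQ k).1
def pv (k : ℕ) : ℕ := (pellQ k).2

lemma pu_succ (k : ℕ) : pu (k+1) = 3 * pu k + 2 * pv k := rfl
lemma pv_succ (k : ℕ) : pv (k+1) = 4 * pu k + 3 * pv k := rfl

theorem pell2_class : ∀ v u : ℕ, 1 ≤ v → 2*u^2 = v^2+1 → ∃ k, u = pu k ∧ v = pv k := by
  intro v
  induction v using Nat.strong_induction_on with
  | _ v ih =>
    intro u hv hu
    rcases le_or_gt v 2 with h2 | h2
    · interval_cases v
      · have : u ≤ 1 := by nlinarith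
        have : 1 ≤ u := by nlinarith
        have hpu : pu 0 = 1 := rfl
        exact ⟨0, by omega, rfl⟩
      · exfalso
        have : u ≤ 2 := by nlinarith
        interval_cases u <;> omega
    · -- v ≥ 3
      have huv : u < v := by nlinarith
      have h32 : 2*v < 3*u := by nlinarith
      have h43 : 4*u < 3*v := by nlinarith
      set u' := 3*u - 2*v with hu'def
      set v' := 3*v - 4*u with hv'def
      have hA : (u' : ℤ) = 3*(u:ℤ) - 2*v := by omega
      have hB : (v' : ℤ) = 3*(v:ℤ) - 4*u := by omega
      have huZ : 2*(u:ℤ)^2 = (v:ℤ)^2+1 := by exact_mod_cast hu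
      have hsq' : 2*(u' : ℤ)^2 = (v':ℤ)^2 + 1 := by rw [hA, hB]; ring_nf; linarith [huZ]
      have hsq : 2*u'^2 = v'^2+1 := by exact_mod_cast hsq'
      have hv'1 : 1 ≤ v' := by omega
      have hv'lt : v' < v := by omega
      obtain ⟨k, hk1, hk2⟩ := ih v' hv'lt u' hv'1 hsq
      refine ⟨k+1, ?_, ?_⟩
      · rw [pu_succ, ← hk1, ← hk2]; omega
      · rw [pv_succ, ← hk1, ← hk2]; omega

/-- link between the two families -/
lemma pv_link : ∀ k, (pu (k+1) = pm k + pt k ∧ pv (k+1) = pm k + 2 * pt k) := by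
  intro k
  induction k with
  | zero => constructor <;> rfl
  | succ k ih =>
    obtain ⟨h1, h2⟩ := ih
    constructor
    · rw [pu_succ, h1, h2, pm_succ, pt_succ]; ring
    · rw [pv_succ, h1, h2, pm_succ, pt_succ]; ring

lemma pv_zero : pv 0 = 1 := rfl

lemma pell_sqR (k : ℕ) : ((pm k : ℝ))^2 = 2*((pt k : ℝ))^2 + 1 := by
  exact_mod_cast congrArg (fun z : ℕ => (z : ℝ)) (pell_sq k)

lemma d_eq (k : ℕ) :
    (Real.sqrt 2 * pm k - 2 * pt k) * (Real.sqrt 2 * pm k + 2 * pt k) = 2 := by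
  linear_combination 2 * pell_sqR k + ((pm k : ℝ)^2) * sq_s2

lemma S_pos (k : ℕ) : (2:ℝ) < Real.sqrt 2 * pm k + 2 * pt k := by
  have h1 := one_lt_s2
  have hM : (3:ℝ) ≤ pm k := by exact_mod_cast pm_ge_three k
  have hT : (2:ℝ) ≤ pt k := by exact_mod_cast pt_ge_two k
  nlinarith

lemma d_pos (k : ℕ) : 0 < Real.sqrt 2 * pm k - 2 * pt k := by
  have h := d_eq k
  have hS := S_pos k
  nlinarith

lemma d_lt_one (k : ℕ) : Real.sqrt 2 * pm k - 2 * pt k < 1 := by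
  have h := d_eq k
  have hS := S_pos k
  nlinarith [d_pos k]

lemma no_three (m t : ℤ) : m^2 - 2*t^2 ≠ 3 := by
  intro h
  have h8 : ((m : ZMod 8))^2 - 2*((t : ZMod 8))^2 = 3 := by
    have := congrArg (fun z : ℤ => (z : ZMod 8)) h
    push_cast at this
    exact this
  revert h8
  generalize (m : ZMod 8) = x
  generalize (t : ZMod 8) = y
  revert x y
  decide

set_option maxHeartbeats 2000000 in
/-- The key exclusion: inside the window, no point is within d of an integer from below. -/
lemma exclusion (k : ℕ) (t : ℕ) (m : ℤ) (h1 : pt k < t) (h2 : t < pm k + 2 * pt k)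
    (hlo : 0 < (m:ℝ) - Real.sqrt 2 * t)
    (hhi : (m:ℝ) - Real.sqrt 2 * t < Real.sqrt 2 * pm k - 2 * pt k) : False := by
  have hs1 := one_lt_s2
  have hs2 := s2_lt
  have hsq := sq_s2
  have hMsq := pell_sqR k
  have hd := d_eq k
  have hdpos := d_pos k
  have hd1 := d_lt_one k
  have hSpos : (0:ℝ) < Real.sqrt 2 * pm k + 2 * pt k := by linarith [S_pos k]
  have hM : (3:ℝ) ≤ pm k := by exact_mod_cast pm_ge_three k
  have hT : (2:ℝ) ≤ pt k := by exact_mod_cast pt_ge_two k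
  have htT : ((pt k : ℝ)) < t := by exact_mod_cast h1
  have htr : (t:ℝ) ≤ (pm k : ℝ) + 2 * pt k - 1 := by
    have : (t:ℝ) + 1 ≤ ((pm k : ℕ) : ℝ) + 2*((pt k : ℕ):ℝ) := by exact_mod_cast h2
    linarith
  have htpos : (0:ℝ) < t := by linarith
  -- m ≥ 1
  have hm1 : 1 ≤ m := by
    have : (0:ℝ) < (m:ℝ) := by nlinarith
    exact_mod_cast this
  have hmr : (1:ℝ) ≤ (m:ℝ) := by exact_mod_cast hm1
  obtain ⟨c, hcdef⟩ : ∃ c : ℤ, c = m^2 - 2*(t:ℤ)^2 := ⟨_, rfl⟩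
  have hceq : (c:ℝ) = ((m:ℝ) - Real.sqrt 2 * t) * ((m:ℝ) + Real.sqrt 2 * t) := by
    rw [hcdef]
    push_cast
    linear_combination ((t:ℝ)^2) * sq_s2
  have hmxpos : (0:ℝ) < (m:ℝ) + Real.sqrt 2 * t := by nlinarith
  -- c ≥ 1
  have hc1 : 1 ≤ c := by
    have : (0:ℝ) < (c:ℝ) := by rw [hceq]; exact mul_pos hlo hmxpos
    exact_mod_cast this
  -- c ≤ 4
  have hmup : (m:ℝ) < Real.sqrt 2 * t + 1 := by linarith
  have step1 : (c:ℝ) < (Real.sqrt 2 * pm k - 2 * pt k) * ((m:ℝ) + Real.sqrt 2 * t) := by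
    rw [hceq]
    exact mul_lt_mul_of_pos_right hhi hmxpos
  have step2 : (c:ℝ) * (Real.sqrt 2 * pm k + 2 * pt k) < 2 * ((m:ℝ) + Real.sqrt 2 * t) := by
    have h' := mul_lt_mul_of_pos_right step1 hSpos
    have e2 : (Real.sqrt 2 * pm k - 2 * pt k) * ((m:ℝ) + Real.sqrt 2 * t) *
        (Real.sqrt 2 * pm k + 2 * pt k) = 2 * ((m:ℝ) + Real.sqrt 2 * t) := by
      linear_combination ((m:ℝ) + Real.sqrt 2 * t) * hd
    linarith [h', e2.ge, e2.le]
  have hc4 : c ≤ 4 := by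
    have hTnn : (0:ℝ) ≤ pt k := by linarith
    have P1 : Real.sqrt 2 * (t:ℝ) ≤ Real.sqrt 2 * ((pm k : ℝ) + 2 * pt k - 1) :=
      mul_le_mul_of_nonneg_left htr (Real.sqrt_nonneg 2)
    have P2 : Real.sqrt 2 * (pt k : ℝ) < 1.5 * pt k := by nlinarith
    have hbig : 2 * ((m:ℝ) + Real.sqrt 2 * t) < 5 * (Real.sqrt 2 * pm k + 2 * pt k) := by
      nlinarith [P1, P2, hdpos, hs1, hmup]
    have hlt5 : (c:ℝ) < 5 :=
      (mul_lt_mul_iff_of_pos_right hSpos).mp (lt_trans step2 hbig)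
    have : c < 5 := by exact_mod_cast hlt5
    omega
  have hc3 : c ≠ 3 := by rw [hcdef]; exact no_three m t
  -- now c ∈ {1, 2, 4}
  interval_cases c
  · -- c = 1 : m² = 2t² + 1
    have hmn : m.toNat ^ 2 = 2 * t^2 + 1 := by
      have hmm : (m.toNat : ℤ) = m := Int.toNat_of_nonneg (by omega)
      have : (m.toNat : ℤ)^2 = 2*(t:ℤ)^2+1 := by rw [hmm]; linarith
      exact_mod_cast this
    obtain ⟨j, hj1, hj2⟩ := pell1_class t m.toNat (by omega) hmn
    rcases le_or_gt j k with hjk | hjk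
    · have := pt_strictMono.monotone hjk
      omega
    · have h1' := pt_strictMono.monotone hjk
      rw [pt_succ] at h1'
      have := pm_ge_three k
      omega
  · -- c = 2 : m² = 2t² + 2, m even
    have hme : Even m := by
      have h2 : Even (m^2) := ⟨t^2+1, by linarith⟩
      exact (Int.even_pow.mp h2).1
    obtain ⟨a, ha⟩ := hme
    have ha1 : 1 ≤ a := by omega
    have han : 2 * a.toNat ^ 2 = t^2 + 1 := by
      have haa : (a.toNat : ℤ) = a := Int.toNat_of_nonneg (by omega)
      have : 2*(a.toNat : ℤ)^2 = (t:ℤ)^2+1 := by rw [haa]; nlinarith [hcdef]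
      exact_mod_cast this
    obtain ⟨j, hj1, hj2⟩ := pell2_class t a.toNat (by omega) han
    match j, hj2 with
    | 0, hj2 =>
      have hv0 : pv 0 = 1 := rfl
      have := pt_ge_two k
      omega
    | (j'+1), hj2 =>
      have hlink := (pv_link j').2
      rcases lt_or_ge j' k with hjk | hjk
      · obtain ⟨k'', rfl⟩ : ∃ k'', k = k''+1 := ⟨k-1, by omega⟩
        have hm1' := pm_strictMono.monotone (by omega : j' ≤ k'')
        have ht1' := pt_strictMono.monotone (by omega : j' ≤ k'')
        have hps := pt_succ k''
        omega
      · have hm1' := pm_strictMono.monotone hjk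
        have ht1' := pt_strictMono.monotone hjk
        omega
  · -- c = 3 : impossible
    exact hc3 rfl
  · -- c = 4 : m² = 2t² + 4, m and t even
    have hme : Even m := by
      have h2 : Even (m^2) := ⟨t^2+2, by linarith⟩
      exact (Int.even_pow.mp h2).1
    obtain ⟨a, ha⟩ := hme
    have ha1 : 1 ≤ a := by omega
    have hte : Even t := by
      by_contra hodd
      rw [Nat.not_even_iff_odd] at hodd
      obtain ⟨b, hb⟩ := hodd
      have htZ : ((t:ℤ)) = 2*(b:ℤ)+1 := by exact_mod_cast congrArg (fun z:ℕ => (z:ℤ)) hb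
      rw [ha, htZ] at hcdef
      have e4 : 4*a^2 = 8*(b:ℤ)^2+8*(b:ℤ)+6 := by linear_combination (-1 : ℤ) * hcdef
      have hEa : ∃ A : ℤ, A = a^2 := ⟨_, rfl⟩
      have hEb : ∃ B : ℤ, B = (b:ℤ)^2 := ⟨_, rfl⟩
      obtain ⟨A, hA⟩ := hEa; obtain ⟨B, hB⟩ := hEb
      rw [← hA, ← hB] at e4
      omega
    obtain ⟨b, hb⟩ := hte
    have hb2 : t = 2*b := by omega
    have hbn : a.toNat ^ 2 = 2 * b^2 + 1 := by
      have haa : (a.toNat : ℤ) = a := Int.toNat_of_nonneg (by omega)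
      have htb : (t:ℤ) = 2*(b:ℤ) := by exact_mod_cast congrArg (fun z : ℕ => (z:ℤ)) hb2
      have : (a.toNat : ℤ)^2 = 2*(b:ℤ)^2+1 := by rw [haa]; nlinarith [hcdef, htb]
      exact_mod_cast this
    have hbpos : 1 ≤ b := by
      have := pt_ge_two k
      omega
    obtain ⟨j, hj1, hj2⟩ := pell1_class b a.toNat hbpos hbn
    rcases lt_trichotomy j k with hjk | hjk | hjk
    · obtain ⟨k'', rfl⟩ : ∃ k'', k = k''+1 := ⟨k-1, by omega⟩
      have ht1' := pt_strictMono.monotone (by omega : j ≤ k'')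
      have hm1' := pm_strictMono.monotone (by omega : j ≤ k'')
      have hps := pt_succ k''
      omega
    · -- j = k : the boundary solution, contradicts the size inequality
      subst hjk
      have hmval : (m:ℝ) = 2 * (pm j : ℝ) := by
        have : m = 2 * (pm j : ℤ) := by
          have haa : (a.toNat : ℤ) = a := Int.toNat_of_nonneg (by omega)
          omega
        exact_mod_cast congrArg (fun z : ℤ => (z:ℝ)) this
      have htval : (t:ℝ) = 2 * (pt j : ℝ) := by
        have : t = 2 * pt j := by omega
        exact_mod_cast congrArg (fun z : ℕ => (z:ℝ)) this
      have key : ((pm j : ℝ) - Real.sqrt 2 * pt j) * (Real.sqrt 2 * pm j + 2 * pt j)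
          = Real.sqrt 2 := by
        linear_combination Real.sqrt 2 * pell_sqR j + (-((pm j:ℝ) * (pt j:ℝ))) * sq_s2
      rw [hmval, htval] at hhi
      nlinarith [hhi, hd, key, hSpos, hs1]
    · have h1' := pt_strictMono.monotone (by omega : k+1 ≤ j)
      rw [pt_succ] at h1'
      have := pm_ge_three k
      omega

/-- within the window, uu shifts by exactly the even constant 2·pt k -/
lemma window_lemma (k : ℕ) (t : ℕ) (ht1 : pt k + 1 ≤ t) (ht2 : t ≤ 2 * pt k + pm k - 1) :
    uu (t + pm k) = uu t + 2 * pt k := by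
  have hs1 := one_lt_s2
  have hT := pt_ge_two k
  have hM := pm_ge_three k
  have hq1 : (uu t : ℝ) < Real.sqrt 2 * t := uu_lt t (by omega)
  have hq2 : Real.sqrt 2 * t < (uu t : ℝ) + 1 := lt_uu t
  have hdpos := d_pos k
  have hd1 := d_lt_one k
  have hkey : Real.sqrt 2 * t + (Real.sqrt 2 * pm k - 2 * pt k) < (uu t : ℝ) + 1 := by
    by_contra hcon
    push_neg at hcon
    have hlo : (0:ℝ) < ((uu t + 1 : ℤ) : ℝ) - Real.sqrt 2 * t := by push_cast; linarith
    have hne : ((uu t + 1 : ℤ) : ℝ) - Real.sqrt 2 * t ≠ Real.sqrt 2 * pm k - 2 * pt k := by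
      intro h
      apply s2_irr (t + pm k : ℕ) (uu t + 1 + 2 * pt k) (by positivity)
      push_cast at h ⊢
      linarith
    have hhi : ((uu t + 1 : ℤ) : ℝ) - Real.sqrt 2 * t < Real.sqrt 2 * pm k - 2 * pt k := by
      rcases lt_or_eq_of_le (by push_cast; linarith :
          ((uu t + 1 : ℤ) : ℝ) - Real.sqrt 2 * t ≤ Real.sqrt 2 * pm k - 2 * pt k) with h | h
      · exact h
      · exact absurd h hne
    exact exclusion k t (uu t + 1) (by omega) (by omega) hlo hhi
  apply Int.floor_eq_iff.mpr
  have e : ((t + pm k : ℕ) : ℝ) = (t : ℝ) + (pm k : ℝ) := by push_cast; ring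
  rw [e]
  constructor
  · push_cast
    nlinarith
  · push_cast
    nlinarith

/-- the periodicity of x3 on the lower-bound windows -/
lemma lower_mem (k : ℕ) :
    ∀ j, j + pm k < 2 * pm k + pt k - 2 → x3 (pt k + j) = x3 (pt k + j + pm k) := by
  intro j hj
  have hT := pt_ge_two k
  have hM := pm_ge_three k
  set a := pt k + j with hadef
  have hw1 : uu (a+1 + pm k) = uu (a+1) + 2 * pt k := window_lemma k (a+1) (by omega) (by omega)
  have hw2 : uu (a+2 + pm k) = uu (a+2) + 2 * pt k := window_lemma k (a+2) (by omega) (by omega)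
  have e1 : a + pm k + 2 = a + 2 + pm k := by omega
  have e2 : a + pm k + 1 = a + 1 + pm k := by omega
  have hcEq : calpha (a + pm k + 1) = calpha (a+1) := by
    rw [calpha_eq, calpha_eq]
    rw [show a + pm k + 1 + 1 = a + 2 + pm k by omega, e2, hw1, hw2,
      show a + 1 + 1 = a + 2 by omega]
    ring
  rcases calpha_cases (a+1) with hc | hc
  · obtain ⟨v1, _⟩ := x3_of_zero a hc
    obtain ⟨v2, _⟩ := x3_of_zero (a + pm k) (by rw [hcEq]; exact hc)
    have heq : (x3 a : ℤ) = (x3 (a + pm k) : ℤ) := by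
      rw [v1, v2, e2, hw1]
      omega
    exact_mod_cast heq
  · rw [x3_of_one a hc, x3_of_one (a + pm k) (by rw [hcEq]; exact hc)]

lemma exp_mem (k : ℕ) :
    ((2 * pm k + pt k - 2 : ℕ) : ℝ) / ((pm k : ℕ) : ℝ) ∈ x3Exponents := by
  have hT := pt_ge_two k
  have hM := pm_ge_three k
  exact ⟨pt k, 2 * pm k + pt k - 2, pm k, by omega, by omega,
    fun j hj => lower_mem k j hj, rfl⟩


/-- The critical exponent of `x₃` equals `2 + √2/2`, and it is not attained: the set of
exponents of factors of `x₃` has least upper bound `2 + √2/2`, and every exponent is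
strictly below it. -/
theorem x3_critical_exponent :
    IsLUB x3Exponents (2 + Real.sqrt 2 / 2) ∧
    ∀ r ∈ x3Exponents, r < 2 + Real.sqrt 2 / 2 := by
  have hs1 := one_lt_s2
  have upper : ∀ r ∈ x3Exponents, r < 2 + Real.sqrt 2 / 2 := by
    rintro r ⟨i, n, p, hn, hp, H, rfl⟩
    exact upper_exp i n p hp H
  refine ⟨⟨fun r hr => (upper r hr).le, ?_⟩, upper⟩
  intro b hb
  by_contra hlt
  push_neg at hlt
  obtain ⟨g, hg⟩ : ∃ g : ℝ, g = 2 + Real.sqrt 2 / 2 - b := ⟨_, rfl⟩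
  have hgpos : 0 < g := by rw [hg]; linarith
  obtain ⟨k, hk⟩ := exists_nat_gt (5 / (2 * g))
  have hT := pt_ge_two k
  have hM3 := pm_ge_three k
  have hMk : (k : ℝ) ≤ (pm k : ℝ) := by exact_mod_cast le_trans (by omega : k ≤ k + 3) (pm_ge k)
  have hMpos : (0:ℝ) < (pm k : ℝ) := by
    have : (3:ℝ) ≤ (pm k : ℝ) := by exact_mod_cast hM3
    linarith
  have hrk := hb (exp_mem k)
  have hcast : ((2 * pm k + pt k - 2 : ℕ) : ℝ) = 2*((pm k : ℕ):ℝ) + ((pt k : ℕ):ℝ) - 2 := by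
    have h2 : 2 ≤ 2 * pm k + pt k := by omega
    push_cast [Nat.cast_sub h2]
    ring
  rw [hcast, div_le_iff₀ hMpos] at hrk
  have hd1 := d_lt_one k
  have key1 : (2 + Real.sqrt 2/2) * (pm k:ℝ) - 5/2 < 2*(pm k:ℝ) + (pt k:ℝ) - 2 := by
    nlinarith [hd1]
  have key2 : (5:ℝ)/2 < g * (pm k:ℝ) := by
    rw [div_lt_iff₀ (by linarith : (0:ℝ) < 2*g)] at hk
    have e : (k:ℝ) * (2*g) = 2 * ((k:ℝ)*g) := by ring
    rw [e] at hk
    have h1 : (k:ℝ)*g ≤ (pm k:ℝ)*g := mul_le_mul_of_nonneg_right hMk hgpos.le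
    have h2 : (pm k:ℝ)*g = g*(pm k:ℝ) := mul_comm _ _
    linarith
  have hbpm : b * (pm k:ℝ) = (2 + Real.sqrt 2/2) * (pm k:ℝ) - g * (pm k:ℝ) := by
    rw [hg]; ring
  linarith [hrk, key1, key2, hbpm.le, hbpm.ge]
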